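/- For all integers n ≥ 2, with a_i := (∑_p A(n,p)*A(n,p-i)) / (∑_p A(n,p))^2 (so that ∑_i a_i = 1 and a_{-i} = a_i), one has a_0 ≤ 1/2; equivalently, 2*∑_p A(n,p)^2 ≤ (∑_p A(n,p))^2. -/

import Mathlib

/-- The Eulerian number `A(n,q)`: the number of permutations of `{1,...,n}`
with exactly `q` ascents.  (In particular `A(n,q) = 0` unless `0 ≤ q < n`.) -/
def eulerian (n q : ℕ) : ℕ :=
  (Finset.univ.filter fun σ : Equiv.Perm (Fin n) =>
    (Finset.univ.filter fun i : Fin n =>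
      ∃ j : Fin n, (j : ℕ) = (i : ℕ) + 1 ∧ σ i < σ j).card = q).card

namespace EulerianAux

open Finset Equiv

/-- ascent count of a permutation -/
def asc {n : ℕ} (σ : Equiv.Perm (Fin n)) : ℕ :=
  (Finset.univ.filter fun i : Fin n =>
    ∃ j : Fin n, (j : ℕ) = (i : ℕ) + 1 ∧ σ i < σ j).card

lemma eulerian_def (n q : ℕ) :
    eulerian n q = (Finset.univ.filter fun σ : Equiv.Perm (Fin n) => asc σ = q).card := rfl

/-- indicator of ascent at natural position `j` -/
def ascInd {n : ℕ} (σ : Equiv.Perm (Fin n)) (j : ℕ) : ℕ :=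
  if h : j + 1 < n then (if σ ⟨j, Nat.lt_of_succ_lt h⟩ < σ ⟨j + 1, h⟩ then 1 else 0) else 0

lemma ascInd_le_one {n : ℕ} (σ : Equiv.Perm (Fin n)) (j : ℕ) : ascInd σ j ≤ 1 := by
  unfold ascInd; split <;> [skip; omega]; split <;> omega

lemma ascInd_of_ge {n : ℕ} (σ : Equiv.Perm (Fin n)) {j : ℕ} (h : ¬ j + 1 < n) :
    ascInd σ j = 0 := by
  unfold ascInd; rw [dif_neg h]

lemma asc_eq_sum {n : ℕ} (σ : Equiv.Perm (Fin n)) :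
    asc σ = ∑ j ∈ Finset.range n, ascInd σ j := by
  rw [asc, Finset.card_filter, ← Fin.sum_univ_eq_sum_range (fun j => ascInd σ j) n]
  refine Finset.sum_congr rfl fun i _ => ?_
  by_cases h : (i : ℕ) + 1 < n
  · rw [ascInd, dif_pos h]
    have : (⟨(i : ℕ), Nat.lt_of_succ_lt h⟩ : Fin n) = i := by ext; rfl
    rw [this]
    congr 1
    simp only [eq_iff_iff]
    constructor
    · rintro ⟨j, hj, hlt⟩
      have : j = (⟨(i : ℕ) + 1, h⟩ : Fin n) := by ext; exact hj
      rwa [← this]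
    · intro hlt
      exact ⟨⟨(i : ℕ) + 1, h⟩, rfl, hlt⟩
  · rw [ascInd_of_ge σ h, if_neg]
    rintro ⟨j, hj, -⟩
    exact h (hj ▸ j.isLt)

lemma asc_add_asc_rev {n : ℕ} (σ : Equiv.Perm (Fin n)) :
    asc σ + asc (σ.trans Fin.revPerm) = n - 1 := by
  rw [asc_eq_sum, asc_eq_sum, ← Finset.sum_add_distrib]
  have h1 : ∀ j ∈ Finset.range n,
      ascInd σ j + ascInd (σ.trans Fin.revPerm) j = if j + 1 < n then 1 else 0 := by
    intro j _
    by_cases h : j + 1 < n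
    · rw [if_pos h, ascInd, ascInd, dif_pos h, dif_pos h]
      simp only [Equiv.trans_apply, Fin.revPerm_apply, Fin.rev_lt_rev]
      have hne : σ ⟨j, Nat.lt_of_succ_lt h⟩ ≠ σ ⟨j + 1, h⟩ := by
        intro hc
        have := σ.injective hc
        simp only [Fin.mk.injEq] at this
        omega
      rcases lt_or_gt_of_ne hne with h' | h'
      · rw [if_pos h', if_neg (by exact not_lt.mpr h'.le)]
      · rw [if_neg (by exact not_lt.mpr h'.le), if_pos h']
    · rw [if_neg h, ascInd_of_ge σ h, ascInd_of_ge _ h]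
  rw [Finset.sum_congr rfl h1, Finset.sum_ite, Finset.sum_const, Finset.sum_const]
  have : Finset.filter (fun j => j + 1 < n) (Finset.range n) = Finset.range (n - 1) := by
    ext j; simp only [Finset.mem_filter, Finset.mem_range]; omega
  simp [this]

lemma asc_le {n : ℕ} (σ : Equiv.Perm (Fin n)) : asc σ ≤ n - 1 := by
  have := asc_add_asc_rev σ; omega

lemma eulerian_symm (n p : ℕ) (hp : p < n) : eulerian n p = eulerian n (n - 1 - p) := by
  rw [eulerian_def, eulerian_def]
  refine Finset.card_bij' (fun σ _ => σ.trans Fin.revPerm) (fun σ _ => σ.trans Fin.revPerm)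
    ?_ ?_ ?_ ?_
  · intro σ hσ
    simp only [Finset.mem_filter, Finset.mem_univ, true_and] at hσ ⊢
    have := asc_add_asc_rev σ
    omega
  · intro σ hσ
    simp only [Finset.mem_filter, Finset.mem_univ, true_and] at hσ ⊢
    have := asc_add_asc_rev σ
    have := asc_le σ
    omega
  · intro σ _
    ext x
    simp [Fin.rev_rev]
  · intro σ _
    ext x
    simp [Fin.rev_rev]

lemma sum_eulerian {n : ℕ} (hn : 1 ≤ n) :
    ∑ p ∈ Finset.range n, eulerian n p = n.factorial := by
  have h := Finset.card_eq_sum_card_fiberwise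
    (f := fun σ : Equiv.Perm (Fin n) => asc σ) (s := Finset.univ) (t := Finset.range n)
    (fun σ _ => Finset.mem_range.mpr (by have := asc_le σ; show asc σ < n; omega))
  simp only [eulerian_def]
  rw [← h, Finset.card_univ, Fintype.card_perm, Fintype.card_fin]

end EulerianAux
namespace EulerianAux

open Finset Equiv

variable {N : ℕ}

/-- insert the maximal value at position `i₀` -/
def ins (i₀ : Fin (N + 1)) (τ : Equiv.Perm (Fin N)) : Equiv.Perm (Fin (N + 1)) :=
  (finSuccEquiv' i₀).trans ((Equiv.optionCongr τ).trans (finSuccEquiv' (Fin.last N)).symm)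

lemma ins_at (i₀ : Fin (N + 1)) (τ : Equiv.Perm (Fin N)) : ins i₀ τ i₀ = Fin.last N := by
  simp [ins, finSuccEquiv'_at, finSuccEquiv'_symm_none]

lemma ins_succAbove (i₀ : Fin (N + 1)) (τ : Equiv.Perm (Fin N)) (k : Fin N) :
    ins i₀ τ (i₀.succAbove k) = Fin.castSucc (τ k) := by
  simp [ins, finSuccEquiv'_succAbove, finSuccEquiv'_symm_some, Fin.succAbove_last]

lemma ins_apply_lt (i₀ : Fin (N + 1)) (τ : Equiv.Perm (Fin N)) {j : ℕ}
    (hj : j < (i₀ : ℕ)) (hjN : j < N) :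
    ins i₀ τ ⟨j, by omega⟩ = Fin.castSucc (τ ⟨j, hjN⟩) := by
  have h : i₀.succAbove ⟨j, hjN⟩ = ⟨j, by omega⟩ := by
    rw [Fin.succAbove_of_castSucc_lt _ _ (by simp [Fin.lt_def, hj])]
    rfl
  rw [← h, ins_succAbove]

lemma ins_apply_gt (i₀ : Fin (N + 1)) (τ : Equiv.Perm (Fin N)) {j : ℕ}
    (hj : (i₀ : ℕ) < j + 1) (hjN : j < N) :
    ins i₀ τ ⟨j + 1, by omega⟩ = Fin.castSucc (τ ⟨j, hjN⟩) := by
  have h : i₀.succAbove ⟨j, hjN⟩ = ⟨j + 1, by omega⟩ := by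
    rw [Fin.succAbove_of_le_castSucc _ _ (by simp [Fin.le_def]; omega)]
    rfl
  rw [← h, ins_succAbove]

lemma sum_aux (a g : ℕ → ℕ) (K : ℕ) (hK : K < N)
    (h1 : ∀ j < K, a j = g j) (h2 : a K = 1) (h3 : a (K + 1) = 0)
    (h4 : ∀ j, K < j → j < N → a (j + 1) = g j) :
    ∑ j ∈ Finset.range (N + 1), a j + g K = ∑ j ∈ Finset.range N, g j + 1 := by
  have e1 : ∑ j ∈ Finset.range (K + 2), a j + ∑ j ∈ Finset.Ico (K + 2) (N + 1), a j
      = ∑ j ∈ Finset.range (N + 1), a j := Finset.sum_range_add_sum_Ico _ (by omega)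
  have e2 : ∑ j ∈ Finset.range (K + 2), a j = ∑ j ∈ Finset.range K, g j + 1 := by
    rw [Finset.sum_range_succ, Finset.sum_range_succ, h2, h3,
      Finset.sum_congr rfl (fun j hj => h1 j (Finset.mem_range.mp hj))]
  have e3 : ∑ j ∈ Finset.Ico (K + 2) (N + 1), a j = ∑ j ∈ Finset.Ico (K + 1) N, g j := by
    rw [Finset.sum_Ico_eq_sum_range, Finset.sum_Ico_eq_sum_range]
    have hc : N + 1 - (K + 2) = N - (K + 1) := by omega
    rw [hc]
    refine Finset.sum_congr rfl fun i hi => ?_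
    have hi' := Finset.mem_range.mp hi
    have hr : K + 2 + i = (K + 1 + i) + 1 := by omega
    rw [hr, h4 (K + 1 + i) (by omega) (by omega)]
  have e4 : ∑ j ∈ Finset.range (K + 1), g j + ∑ j ∈ Finset.Ico (K + 1) N, g j
      = ∑ j ∈ Finset.range N, g j := Finset.sum_range_add_sum_Ico _ (by omega)
  have e5 : ∑ j ∈ Finset.range (K + 1), g j = ∑ j ∈ Finset.range K, g j + g K :=
    Finset.sum_range_succ _ _
  omega

lemma asc_ins (τ : Equiv.Perm (Fin N)) (i₀ : Fin (N + 1)) :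
    asc (ins i₀ τ) + (if (i₀ : ℕ) = 0 then 1 else ascInd τ ((i₀ : ℕ) - 1)) = asc τ + 1 := by
  by_cases h0 : (i₀ : ℕ) = 0
  · rw [if_pos h0, asc_eq_sum, asc_eq_sum]
    have key : ∑ j ∈ Finset.range (N + 1), ascInd (ins i₀ τ) j
        = ∑ j ∈ Finset.range N, ascInd τ j := by
      rw [Finset.sum_range_succ' (fun j => ascInd (ins i₀ τ) j)]
      have hz : ascInd (ins i₀ τ) 0 = 0 := by
        unfold ascInd
        split
        · rename_i h
          rw [if_neg]
          have he : (⟨0, by omega⟩ : Fin (N + 1)) = i₀ := Fin.ext (by simp [h0])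
          rw [he, ins_at]
          exact Fin.not_lt.mpr (Fin.le_last _)
        · rfl
      rw [hz, add_zero]
      refine Finset.sum_congr rfl fun j hj => ?_
      have hjN := Finset.mem_range.mp hj
      show ascInd (ins i₀ τ) (j + 1) = ascInd τ j
      unfold ascInd
      by_cases h : j + 1 < N
      · rw [dif_pos (by omega : j + 1 + 1 < N + 1), dif_pos h]
        have v1 : ins i₀ τ ⟨j + 1, by omega⟩ = Fin.castSucc (τ ⟨j, by omega⟩) :=
          ins_apply_gt i₀ τ (by omega) (by omega)
        have v2 : ins i₀ τ ⟨j + 1 + 1, by omega⟩ = Fin.castSucc (τ ⟨j + 1, by omega⟩) :=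
          ins_apply_gt i₀ τ (by omega) (by omega)
        rw [v1, v2]
        simp [Fin.castSucc_lt_castSucc_iff]
      · rw [dif_neg (by omega), dif_neg h]
    omega
  · obtain ⟨K, hIK⟩ : ∃ K, (i₀ : ℕ) = K + 1 := ⟨(i₀ : ℕ) - 1, by omega⟩
    rw [if_neg h0, hIK]
    have hKN : K < N := by have := i₀.isLt; omega
    rw [asc_eq_sum, asc_eq_sum]
    show (∑ j ∈ Finset.range (N + 1), ascInd (ins i₀ τ) j) + ascInd τ (K + 1 - 1)
        = (∑ j ∈ Finset.range N, ascInd τ j) + 1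
    have hsimp : K + 1 - 1 = K := by omega
    rw [hsimp]
    refine sum_aux (fun j => ascInd (ins i₀ τ) j) (fun j => ascInd τ j) K hKN ?_ ?_ ?_ ?_
    · intro j hj
      show ascInd (ins i₀ τ) j = ascInd τ j
      unfold ascInd
      rw [dif_pos (by omega : j + 1 < N + 1), dif_pos (by omega : j + 1 < N)]
      have v1 : ins i₀ τ ⟨j, by omega⟩ = Fin.castSucc (τ ⟨j, by omega⟩) :=
        ins_apply_lt i₀ τ (by omega) (by omega)
      have v2 : ins i₀ τ ⟨j + 1, by omega⟩ = Fin.castSucc (τ ⟨j + 1, by omega⟩) :=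
        ins_apply_lt i₀ τ (by omega) (by omega)
      rw [v1, v2]
      simp [Fin.castSucc_lt_castSucc_iff]
    · show ascInd (ins i₀ τ) K = 1
      unfold ascInd
      rw [dif_pos (by omega : K + 1 < N + 1)]
      have v1 : ins i₀ τ ⟨K, by omega⟩ = Fin.castSucc (τ ⟨K, by omega⟩) :=
        ins_apply_lt i₀ τ (by omega) (by omega)
      have v2 : ins i₀ τ ⟨K + 1, by omega⟩ = Fin.last N := by
        have he : (⟨K + 1, by omega⟩ : Fin (N + 1)) = i₀ := Fin.ext (by simp [hIK])
        rw [he, ins_at]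
      rw [v1, v2, if_pos (Fin.castSucc_lt_last _)]
    · show ascInd (ins i₀ τ) (K + 1) = 0
      unfold ascInd
      split
      · rw [if_neg]
        have v1 : ins i₀ τ ⟨K + 1, by omega⟩ = Fin.last N := by
          have he : (⟨K + 1, by omega⟩ : Fin (N + 1)) = i₀ := Fin.ext (by simp [hIK])
          rw [he, ins_at]
        rw [v1]
        exact Fin.not_lt.mpr (Fin.le_last _)
      · rfl
    · intro j hj1 hj2
      show ascInd (ins i₀ τ) (j + 1) = ascInd τ j
      unfold ascInd
      by_cases h : j + 1 < N
      · rw [dif_pos (by omega : j + 1 + 1 < N + 1), dif_pos h]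
        have v1 : ins i₀ τ ⟨j + 1, by omega⟩ = Fin.castSucc (τ ⟨j, by omega⟩) :=
          ins_apply_gt i₀ τ (by omega) (by omega)
        have v2 : ins i₀ τ ⟨j + 1 + 1, by omega⟩ = Fin.castSucc (τ ⟨j + 1, by omega⟩) :=
          ins_apply_gt i₀ τ (by omega) (by omega)
        rw [v1, v2]
        simp [Fin.castSucc_lt_castSucc_iff]
      · rw [dif_neg (by omega), dif_neg h]

lemma exists_ins (σ : Equiv.Perm (Fin (N + 1))) : ∃ i₀ τ, ins i₀ τ = σ := by
  set i₀ := σ.symm (Fin.last N) with hi₀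
  set q : Option (Fin N) ≃ Option (Fin N) :=
    (finSuccEquiv' i₀).symm.trans (σ.trans (finSuccEquiv' (Fin.last N))) with hq
  have hqnone : q none = none := by
    simp only [hq, Equiv.trans_apply, finSuccEquiv'_symm_none, hi₀,
      Equiv.apply_symm_apply, finSuccEquiv'_at]
  refine ⟨i₀, Equiv.removeNone q, ?_⟩
  have hoc : Equiv.optionCongr (Equiv.removeNone q) = q := by
    ext x
    cases x with
    | none => simp [hqnone]
    | some k =>
      have hex : ∃ x', q (some k) = some x' := by
        cases h : q (some k) with
        | none =>
          exfalso
          have := q.injective (h.trans hqnone.symm)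
          simp at this
        | some y => exact ⟨y, rfl⟩
      have := Equiv.removeNone_some q hex
      simp only [Equiv.optionCongr_apply, Option.map_some]
      rw [this]
  rw [ins, hoc, hq]
  ext x
  simp [Equiv.trans_apply]

end EulerianAux
namespace EulerianAux

open Finset Equiv

lemma asc_filter_card {N : ℕ} (τ : Equiv.Perm (Fin N)) :
    ((Finset.range N).filter fun j => ascInd τ j = 1).card = asc τ := by
  rw [asc_eq_sum, Finset.card_filter]
  refine Finset.sum_congr rfl fun j _ => ?_
  have := ascInd_le_one τ j
  interval_cases h : ascInd τ j <;> simp [h]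

lemma asc_filter_zero_card {N : ℕ} (τ : Equiv.Perm (Fin N)) :
    ((Finset.range N).filter fun j => ascInd τ j = 0).card = N - asc τ := by
  have h := Finset.card_filter_add_card_filter_not
    (s := Finset.range N) (p := fun j => ascInd τ j = 0)
  have heq : (Finset.range N).filter (fun j => ¬ ascInd τ j = 0)
      = (Finset.range N).filter fun j => ascInd τ j = 1 := by
    refine Finset.filter_congr fun j _ => ?_
    have := ascInd_le_one τ j
    constructor <;> intro <;> omega
  rw [heq, asc_filter_card] at h
  have := asc_le τ
  rw [Finset.card_range] at h
  omega

lemma card_slots_le (m : ℕ) (τ : Equiv.Perm (Fin (2 * m))) :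
    ((Finset.univ : Finset (Fin (2 * m + 1))).filter
      fun i₀ => asc (ins i₀ τ) = m).card ≤ m + 1 := by
  classical
  set s := ((Finset.univ : Finset (Fin (2 * m + 1))).filter
    fun i₀ => asc (ins i₀ τ) = m) with hs
  have hmem : ∀ i₀ : Fin (2 * m + 1), i₀ ∈ s → asc (ins i₀ τ) = m := by
    intro i₀ hi₀
    rw [hs, Finset.mem_filter] at hi₀
    exact hi₀.2
  by_cases hk : asc τ = m
  · have key : ∀ i₀ : Fin (2 * m + 1), i₀ ∈ s → ¬ (i₀ : ℕ) = 0 →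
        ascInd τ ((i₀ : ℕ) - 1) = 1 := by
      intro i₀ hi₀ hne
      have hf := asc_ins τ i₀
      rw [if_neg hne, hmem i₀ hi₀, hk] at hf
      omega
    have h23 := Finset.card_filter_add_card_filter_not
      (s := s) (p := fun i₀ : Fin (2 * m + 1) => (i₀ : ℕ) = 0)
    have h2 : (s.filter fun i₀ : Fin (2 * m + 1) => (i₀ : ℕ) = 0).card ≤ 1 := by
      refine Finset.card_le_one.mpr fun a ha b hb => ?_
      rw [Finset.mem_filter] at ha hb
      exact Fin.ext (by omega)
    have h3 : (s.filter fun i₀ : Fin (2 * m + 1) => ¬ (i₀ : ℕ) = 0).card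
        ≤ ((Finset.range (2 * m)).filter fun j => ascInd τ j = 1).card := by
      refine Finset.card_le_card_of_injOn (fun i₀ => (i₀ : ℕ) - 1) ?_ ?_
      · intro i₀ hi₀
        simp only [Finset.mem_coe, Finset.mem_filter] at hi₀
        show ((i₀ : ℕ) - 1) ∈ _
        rw [Finset.mem_coe, Finset.mem_filter, Finset.mem_range]
        have := i₀.isLt
        exact ⟨by omega, key i₀ hi₀.1 hi₀.2⟩
      · intro a ha b hb hab
        simp only [Finset.mem_coe, Finset.mem_filter] at ha hb
        have hab' : (a : ℕ) - 1 = (b : ℕ) - 1 := hab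
        exact Fin.ext (by omega)
    rw [asc_filter_card, hk] at h3
    omega
  · by_cases hk' : asc τ + 1 = m
    · have key : ∀ i₀ : Fin (2 * m + 1), i₀ ∈ s →
          ¬ (i₀ : ℕ) = 0 ∧ ascInd τ ((i₀ : ℕ) - 1) = 0 := by
        intro i₀ hi₀
        have hf := asc_ins τ i₀
        rw [hmem i₀ hi₀] at hf
        by_cases h0 : (i₀ : ℕ) = 0
        · rw [if_pos h0] at hf; omega
        · rw [if_neg h0] at hf; exact ⟨h0, by omega⟩
      have h3 : s.card ≤ ((Finset.range (2 * m)).filter fun j => ascInd τ j = 0).card := by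
        refine Finset.card_le_card_of_injOn (fun i₀ => (i₀ : ℕ) - 1) ?_ ?_
        · intro i₀ hi₀
          simp only [Finset.mem_coe] at hi₀
          show ((i₀ : ℕ) - 1) ∈ _
          rw [Finset.mem_coe, Finset.mem_filter, Finset.mem_range]
          have := i₀.isLt
          exact ⟨by omega, (key i₀ hi₀).2⟩
        · intro a ha b hb hab
          simp only [Finset.mem_coe] at ha hb
          have hab' : (a : ℕ) - 1 = (b : ℕ) - 1 := hab
          have h1 := (key a ha).1
          have h2 := (key b hb).1
          exact Fin.ext (by omega)
      rw [asc_filter_zero_card] at h3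
      have := asc_le τ
      omega
    · have hempty : s = ∅ := by
        rw [Finset.eq_empty_iff_forall_notMem]
        intro i₀ hi₀
        have hf := asc_ins τ i₀
        rw [hmem i₀ hi₀] at hf
        by_cases h0 : (i₀ : ℕ) = 0
        · rw [if_pos h0] at hf; omega
        · rw [if_neg h0] at hf
          have := ascInd_le_one τ ((i₀ : ℕ) - 1)
          omega
      rw [hempty]
      simp

end EulerianAux
namespace EulerianAux

open Finset Equiv

lemma eulerian_central_le (m : ℕ) :
    eulerian (2 * m + 1) m ≤ (m + 1) * Nat.factorial (2 * m) := by
  classical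
  rw [eulerian_def]
  have hsurj : Set.SurjOn (fun p : Fin (2 * m + 1) × Equiv.Perm (Fin (2 * m)) => ins p.1 p.2)
      ((Finset.univ.filter fun p : Fin (2 * m + 1) × Equiv.Perm (Fin (2 * m)) =>
        asc (ins p.1 p.2) = m) : Finset _)
      ((Finset.univ.filter fun σ : Equiv.Perm (Fin (2 * m + 1)) => asc σ = m) : Finset _) := by
    intro σ hσ
    simp only [Finset.coe_filter, Set.mem_setOf_eq, Finset.mem_univ, true_and] at hσ
    obtain ⟨i₀, τ, hins⟩ := exists_ins σ
    exact ⟨(i₀, τ), by simp [hins, hσ], hins⟩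
  have h1 := Finset.card_le_card_of_surjOn _ hsurj
  refine le_trans h1 ?_
  rw [Finset.card_eq_sum_card_fiberwise
    (f := fun p : Fin (2 * m + 1) × Equiv.Perm (Fin (2 * m)) => p.2)
    (t := Finset.univ) (fun p _ => Finset.mem_univ _)]
  have hbound : ∀ τ ∈ (Finset.univ : Finset (Equiv.Perm (Fin (2 * m)))),
      ((Finset.univ.filter fun p : Fin (2 * m + 1) × Equiv.Perm (Fin (2 * m)) =>
        asc (ins p.1 p.2) = m).filter
          fun p : Fin (2 * m + 1) × Equiv.Perm (Fin (2 * m)) => p.2 = τ).card ≤ m + 1 := by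
    intro τ _
    refine le_trans ?_ (card_slots_le m τ)
    refine Finset.card_le_card_of_injOn (fun p => p.1) ?_ ?_
    · intro p hp
      simp only [Finset.mem_coe, Finset.mem_filter] at hp
      show p.1 ∈ _
      rw [Finset.mem_coe, Finset.mem_filter]
      refine ⟨Finset.mem_univ _, ?_⟩
      rw [← hp.2]
      exact hp.1.2
    · intro a ha b hb hab
      simp only [Finset.mem_coe, Finset.mem_filter] at ha hb
      have hab' : a.1 = b.1 := hab
      exact Prod.ext hab' (ha.2.trans hb.2.symm)
  calc ∑ τ ∈ (Finset.univ : Finset (Equiv.Perm (Fin (2 * m)))),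
        ((Finset.univ.filter fun p : Fin (2 * m + 1) × Equiv.Perm (Fin (2 * m)) =>
          asc (ins p.1 p.2) = m).filter
            fun p : Fin (2 * m + 1) × Equiv.Perm (Fin (2 * m)) => p.2 = τ).card
      ≤ ∑ _τ ∈ (Finset.univ : Finset (Equiv.Perm (Fin (2 * m)))), (m + 1) :=
        Finset.sum_le_sum hbound
    _ = (m + 1) * Nat.factorial (2 * m) := by
        rw [Finset.sum_const, Finset.card_univ, Fintype.card_perm, Fintype.card_fin,
          smul_eq_mul, mul_comm]

lemma central_bound (m : ℕ) (hm : 1 ≤ m) :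
    3 * eulerian (2 * m + 1) m ≤ 2 * Nat.factorial (2 * m + 1) := by
  have h1 := eulerian_central_le m
  have h2 : 3 * ((m + 1) * Nat.factorial (2 * m)) ≤ 2 * Nat.factorial (2 * m + 1) := by
    rw [Nat.factorial_succ]
    have h3 : 3 * (m + 1) ≤ 2 * (2 * m + 1) := by omega
    calc 3 * ((m + 1) * Nat.factorial (2 * m)) = (3 * (m + 1)) * Nat.factorial (2 * m) := by ring
      _ ≤ (2 * (2 * m + 1)) * Nat.factorial (2 * m) := Nat.mul_le_mul_right _ h3
      _ = 2 * ((2 * m + 1) * Nat.factorial (2 * m)) := by ring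
  omega

end EulerianAux

/-- For all `n ≥ 2`, the central autocorrelation coefficient
`a₀ = (∑ₚ A(n,p)²)/(∑ₚ A(n,p))²` satisfies `a₀ ≤ 1/2`; equivalently,
`2 ∑ₚ A(n,p)² ≤ (∑ₚ A(n,p))²`.  (The sums run over all integers `p`, but the
Eulerian numbers `A(n,p)` vanish outside `0 ≤ p < n`.) -/
theorem eulerian_central_term_le (n : ℕ) (hn : 2 ≤ n) :
    2 * ∑ p ∈ Finset.range n, (eulerian n p) ^ 2 ≤
      (∑ p ∈ Finset.range n, eulerian n p) ^ 2 := by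
  classical
  open EulerianAux in
  simp only [pow_two]
  set f : ℕ → ℕ := eulerian n with hf
  set S : ℕ := ∑ p ∈ Finset.range n, f p with hS
  have hsym : ∀ p < n, f (n - 1 - p) = f p := fun p hp => (eulerian_symm n p hp).symm
  have hrow : ∀ (t : Finset ℕ), t ⊆ Finset.range n → ∀ p,
      ∑ q ∈ t, f p * f q ≤ f p * S := by
    intro t ht p
    calc ∑ q ∈ t, f p * f q ≤ ∑ q ∈ Finset.range n, f p * f q :=
          Finset.sum_le_sum_of_subset ht
      _ = f p * S := by rw [hS, Finset.mul_sum]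
  rcases Nat.even_or_odd n with ⟨k, hk⟩ | ⟨m, hm2⟩
  · -- even case
    subst hk
    have hrow2 : ∀ p ∈ Finset.range (k + k),
        f p * f p + f p * f (k + k - 1 - p) ≤ f p * S := by
      intro p hp
      rw [Finset.mem_range] at hp
      have hne : p ≠ k + k - 1 - p := by omega
      have he : f p * f p + f p * f (k + k - 1 - p)
          = ∑ q ∈ ({p, k + k - 1 - p} : Finset ℕ), f p * f q := by
        rw [Finset.sum_pair hne]
      rw [he]
      refine hrow _ ?_ p
      intro q hq
      simp only [Finset.mem_insert, Finset.mem_singleton] at hq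
      rw [Finset.mem_range]
      rcases hq with h | h <;> omega
    have h1 := Finset.sum_le_sum hrow2
    rw [Finset.sum_add_distrib] at h1
    have h2 : ∑ p ∈ Finset.range (k + k), f p * f (k + k - 1 - p)
        = ∑ p ∈ Finset.range (k + k), f p * f p := by
      refine Finset.sum_congr rfl fun p hp => ?_
      rw [Finset.mem_range] at hp
      rw [hsym p hp]
    have h3 : ∑ p ∈ Finset.range (k + k), f p * S = S * S := by
      rw [hS, Finset.sum_mul]
    rw [h2, h3] at h1
    omega
  · -- odd case
    subst hm2
    have hm : 1 ≤ m := by omega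
    set c := m with hc
    have hcmem : c ∈ Finset.range (2 * m + 1) := Finset.mem_range.mpr (by omega)
    have hrow2 : ∀ p ∈ (Finset.range (2 * m + 1)).erase c,
        f p * f p + f p * f (2 * m + 1 - 1 - p) + f p * f c ≤ f p * S := by
      intro p hp
      rw [Finset.mem_erase, Finset.mem_range] at hp
      obtain ⟨hpc, hplt⟩ := hp
      have hne1 : p ≠ 2 * m + 1 - 1 - p := by omega
      have hne2 : 2 * m + 1 - 1 - p ≠ c := by omega
      have hne3 : p ≠ c := hpc
      have he : f p * f p + f p * f (2 * m + 1 - 1 - p) + f p * f c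
          = ∑ q ∈ ({p, 2 * m + 1 - 1 - p, c} : Finset ℕ), f p * f q := by
        rw [Finset.sum_insert (by simp only [Finset.mem_insert, Finset.mem_singleton]; omega),
          Finset.sum_pair hne2, add_assoc]
      rw [he]
      refine hrow _ ?_ p
      intro q hq
      simp only [Finset.mem_insert, Finset.mem_singleton] at hq
      rw [Finset.mem_range]
      rcases hq with h | h | h <;> omega
    have H1 := Finset.sum_le_sum hrow2
    rw [Finset.sum_add_distrib, Finset.sum_add_distrib] at H1
    have h2 : ∑ p ∈ (Finset.range (2 * m + 1)).erase c, f p * f (2 * m + 1 - 1 - p)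
        = ∑ p ∈ (Finset.range (2 * m + 1)).erase c, f p * f p := by
      refine Finset.sum_congr rfl fun p hp => ?_
      rw [Finset.mem_erase, Finset.mem_range] at hp
      rw [hsym p hp.2]
    rw [h2] at H1
    have E0 : ∑ p ∈ (Finset.range (2 * m + 1)).erase c, f p * S + f c * S = S * S := by
      rw [Finset.sum_erase_add _ _ hcmem, hS, Finset.sum_mul]
    have E1 : ∑ p ∈ (Finset.range (2 * m + 1)).erase c, f p * f p + f c * f c
        = ∑ p ∈ Finset.range (2 * m + 1), f p * f p :=
      Finset.sum_erase_add _ _ hcmem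
    have E2 : ∑ p ∈ (Finset.range (2 * m + 1)).erase c, f p * f c + f c * f c
        = S * f c := by
      rw [Finset.sum_erase_add _ _ hcmem, hS, Finset.sum_mul]
    have HS : S = Nat.factorial (2 * m + 1) := sum_eulerian (by omega)
    have H2 : 3 * f c ≤ 2 * S := by
      rw [HS]
      exact central_bound m hm
    have H3 : f c * (3 * f c) ≤ f c * (2 * S) := Nat.mul_le_mul_left _ H2
    nlinarith [H1, E0, E1, E2, H3]
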